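/- Let (g,ρ,V,𝒱,B₀) be a standard pentad and let U, W be g-modules. Then the positive extension of U ⊕ W with respect to (g,ρ,V,𝒱,B₀) is isomorphic as an L(g,ρ,V,𝒱,B₀)-module to the direct sum of the positive extensions of U and W. -/

import Mathlib

/-- A **standard pentad** `(g, ρ, V, 𝒱, B₀)` in the abstract-dual formulation: a Lie algebra
`g` with a non-degenerate invariant bilinear form `B`, representations `ρ` on `V` and `ϱ`
on `W` (with `W` playing the role of the `g`-submodule `𝒱 ⊆ Hom(V, k)`, realized via the
non-degenerate pairing `pair`, so that `ϱ` is the canonical dual action), together with a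
Φ-map `Φ`. -/
structure PentadStruct (k g V W : Type*) [Field k] [LieRing g] [LieAlgebra k g]
    [AddCommGroup V] [Module k V] [AddCommGroup W] [Module k W] where
  ρ : g →ₗ[k] V →ₗ[k] V
  rep_ρ : ∀ a b : g, ρ ⁅a, b⁆ = ρ a ∘ₗ ρ b - ρ b ∘ₗ ρ a
  ϱ : g →ₗ[k] W →ₗ[k] W
  rep_ϱ : ∀ a b : g, ϱ ⁅a, b⁆ = ϱ a ∘ₗ ϱ b - ϱ b ∘ₗ ϱ a
  pair : V →ₗ[k] W →ₗ[k] k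
  pair_compat : ∀ (a : g) (v : V) (w : W), pair (ρ a v) w = - pair v (ϱ a w)
  pair_nondeg_left : ∀ v : V, (∀ w : W, pair v w = 0) → v = 0
  pair_nondeg_right : ∀ w : W, (∀ v : V, pair v w = 0) → w = 0
  B : g →ₗ[k] g →ₗ[k] k
  B_nondeg_left : ∀ a : g, (∀ b : g, B a b = 0) → a = 0
  B_nondeg_right : ∀ b : g, (∀ a : g, B a b = 0) → b = 0
  B_invariant : ∀ a b c : g, B ⁅a, b⁆ c = B a ⁅b, c⁆
  Φ : V →ₗ[k] W →ₗ[k] g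
  Φ_compat : ∀ (a : g) (v : V) (w : W), B a (Φ v w) = pair (ρ a v) w

/-- The graded Lie algebra `L(g, ρ, V, 𝒱, B₀) = ⊕ₙ Vₙ` associated with a standard pentad,
characterized by its defining properties: it is ℤ-graded, its degrees `0`, `1`, `-1` are the
images of `g`, `V`, `𝒱` (compatibly with the Lie structures and the Φ-map), the higher graded
pieces satisfy `V_{i+1} = [V₁, V_i]`, `V_{-i-1} = [V₋₁, V₋ᵢ]` for `i ≥ 1`, and elements of
`Vₙ`, `|n| ≥ 2`, are by construction (as homomorphisms) determined by their brackets with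
`V_{∓1}`. -/
structure AssocGradedLieAlgebra (k g V W : Type*) [Field k] [LieRing g] [LieAlgebra k g]
    [AddCommGroup V] [Module k V] [AddCommGroup W] [Module k W]
    (P : PentadStruct k g V W) (L : Type*) [LieRing L] [LieAlgebra k L] where
  grading : ℤ → Submodule k L
  isInternal : DirectSum.IsInternal grading
  lie_mem : ∀ (n m : ℤ), ∀ x ∈ grading n, ∀ y ∈ grading m, ⁅x, y⁆ ∈ grading (n + m)
  ιg : g →ₗ[k] L
  ιV : V →ₗ[k] L
  ιW : W →ₗ[k] L
  ιg_inj : Function.Injective ιg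
  ιV_inj : Function.Injective ιV
  ιW_inj : Function.Injective ιW
  ιg_range : LinearMap.range ιg = grading 0
  ιV_range : LinearMap.range ιV = grading 1
  ιW_range : LinearMap.range ιW = grading (-1)
  ιg_lie : ∀ a b : g, ιg ⁅a, b⁆ = ⁅ιg a, ιg b⁆
  lie_ιV : ∀ (a : g) (v : V), ⁅ιg a, ιV v⁆ = ιV (P.ρ a v)
  lie_ιW : ∀ (a : g) (w : W), ⁅ιg a, ιW w⁆ = ιW (P.ϱ a w)
  lie_Φ : ∀ (v : V) (w : W), ⁅ιV v, ιW w⁆ = ιg (P.Φ v w)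
  span_pos : ∀ i : ℤ, 1 ≤ i → grading (i + 1)
    = Submodule.span k {z : L | ∃ x ∈ grading 1, ∃ y ∈ grading i, z = ⁅x, y⁆}
  span_neg : ∀ i : ℤ, 1 ≤ i → grading (-i - 1)
    = Submodule.span k {z : L | ∃ x ∈ grading (-1), ∃ y ∈ grading (-i), z = ⁅x, y⁆}
  trans_pos : ∀ n : ℤ, 2 ≤ n → ∀ x ∈ grading n, (∀ y ∈ grading (-1), ⁅x, y⁆ = 0) → x = 0
  trans_neg : ∀ n : ℤ, 2 ≤ n → ∀ x ∈ grading (-n), (∀ y ∈ grading 1, ⁅x, y⁆ = 0) → x = 0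

/-- The **positive extension** `Ũ⁺ = ⊕_{m≥0} U⁺ₘ` of the `g`-module `U⁺₀` with respect to a
standard pentad, as an `L`-module: it is positively graded, transitive, and generated by
`V₀`, `V₁` and `U⁺₀` (i.e. `U⁺_{m+1} = V₁ · U⁺ₘ`). -/
structure PositiveExtension (k g V W : Type*) [Field k] [LieRing g] [LieAlgebra k g]
    [AddCommGroup V] [Module k V] [AddCommGroup W] [Module k W]
    (P : PentadStruct k g V W) (L : Type*) [LieRing L] [LieAlgebra k L]
    (A : AssocGradedLieAlgebra k g V W P L)
    (M : Type*) [AddCommGroup M] [Module k M] [LieRingModule L M] [LieModule k L M] where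
  grading : ℤ → Submodule k M
  isInternal : DirectSum.IsInternal grading
  zero_of_neg : ∀ n : ℤ, n < 0 → grading n = ⊥
  lie_mem : ∀ (n m : ℤ), ∀ x ∈ A.grading n, ∀ u ∈ grading m, ⁅x, u⁆ ∈ grading (n + m)
  transitive : ∀ m : ℤ, 1 ≤ m → ∀ u ∈ grading m,
    (∀ y ∈ A.grading (-1), ⁅y, u⁆ = 0) → u = 0
  span_step : ∀ m : ℤ, 0 ≤ m → grading (m + 1)
    = Submodule.span k {w : M | ∃ x ∈ A.grading 1, ∃ u ∈ grading m, w = ⁅x, u⁆}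

section ProdModule

variable {k L M N : Type*} [Field k] [LieRing L] [LieAlgebra k L]
  [AddCommGroup M] [Module k M] [LieRingModule L M]
  [AddCommGroup N] [Module k N] [LieRingModule L N]

/-- Direct sum (product) of two Lie modules, with componentwise action. -/
instance prodLieRingModule : LieRingModule L (M × N) where
  bracket x u := (⁅x, u.1⁆, ⁅x, u.2⁆)
  add_lie x y u := by ext <;> simp [add_lie]
  lie_add x u v := by ext <;> simp
  leibniz_lie x y u := by ext <;> simp

instance prodLieModule [LieModule k L M] [LieModule k L N] : LieModule k L (M × N) where
  smul_lie t x u := by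
    have h : ⁅t • x, u⁆ = (⁅t • x, u.1⁆, ⁅t • x, u.2⁆) := rfl
    have h' : ⁅x, u⁆ = (⁅x, u.1⁆, ⁅x, u.2⁆) := rfl
    rw [h, h']; ext <;> simp
  lie_smul t x u := by
    have h : ⁅x, t • u⁆ = (⁅x, (t • u).1⁆, ⁅x, (t • u).2⁆) := rfl
    have h' : ⁅x, u⁆ = (⁅x, u.1⁆, ⁅x, u.2⁆) := rfl
    rw [h, h']; ext <;> simp

end ProdModule
section Statement17Aux

variable {k g V W L MU MW MUW : Type*} [Field k] [LieRing g] [LieAlgebra k g]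
    [AddCommGroup V] [Module k V] [AddCommGroup W] [Module k W]
    [LieRing L] [LieAlgebra k L]
    [AddCommGroup MU] [Module k MU] [LieRingModule L MU] [LieModule k L MU]
    [AddCommGroup MW] [Module k MW] [LieRingModule L MW] [LieModule k L MW]
    [AddCommGroup MUW] [Module k MUW] [LieRingModule L MUW] [LieModule k L MUW]
    {P : PentadStruct k g V W}
    (A : AssocGradedLieAlgebra k g V W P L)
    (EU : PositiveExtension k g V W P L A MU)
    (EW : PositiveExtension k g V W P L A MW)
    (EUW : PositiveExtension k g V W P L A MUW)
    (e : ↥(EUW.grading 0) ≃ₗ[k] ↥(EU.grading 0) × ↥(EW.grading 0))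
    (he : ∀ (a : g) (u : EUW.grading 0) (h : ⁅A.ιg a, (u : MUW)⁆ ∈ EUW.grading 0),
      (((e ⟨⁅A.ιg a, (u : MUW)⁆, h⟩).1 : MU), ((e ⟨⁅A.ιg a, (u : MUW)⁆, h⟩).2 : MW))
        = (⁅A.ιg a, ((e u).1 : MU)⁆, ⁅A.ιg a, ((e u).2 : MW)⁆))

/-- componentwise bracket on the triple product -/
lemma brkP (x : L) (p : MUW × (MU × MW)) :
    ⁅x, p⁆ = (⁅x, p.1⁆, (⁅x, p.2.1⁆, ⁅x, p.2.2⁆)) := rfl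

/-- the map whose range is the degree-0 graph -/
noncomputable def h0 : ↥(EUW.grading 0) →ₗ[k] MUW × (MU × MW) :=
  ((EUW.grading 0).subtype).prod
    (((EU.grading 0).subtype.prodMap (EW.grading 0).subtype) ∘ₗ e.toLinearMap)

/-- the graph submodules, degree by degree -/
noncomputable def S17 : ℕ → Submodule k (MUW × (MU × MW))
  | 0 => LinearMap.range (h0 A EU EW EUW e)
  | (m+1) => Submodule.span k
      {w | ∃ x ∈ A.grading 1, ∃ p ∈ S17 m, w = ⁅x, p⁆}

lemma S17_succ (m : ℕ) : S17 A EU EW EUW e (m+1) = Submodule.span k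
    {w | ∃ x ∈ A.grading 1, ∃ p ∈ S17 A EU EW EUW e m, w = ⁅x, p⁆} := rfl

/-- target grading on the triple product -/
def Qgrad (n : ℤ) : Submodule k (MUW × (MU × MW)) :=
  (EUW.grading n).prod ((EU.grading n).prod (EW.grading n))

lemma S17_le : ∀ m : ℕ, S17 A EU EW EUW e m ≤ Qgrad A EU EW EUW (m : ℤ) := by
  intro m
  induction m with
  | zero =>
    rintro p ⟨u, rfl⟩
    exact ⟨u.2, (e u).1.2, (e u).2.2⟩
  | succ m ih =>
    rw [S17_succ A EU EW EUW e]
    rw [Submodule.span_le]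
    rintro w ⟨x, hx, p, hp, rfl⟩
    have h1 := EUW.lie_mem 1 (m : ℤ) x hx p.1 (ih hp).1
    have h2 := EU.lie_mem 1 (m : ℤ) x hx p.2.1 (ih hp).2.1
    have h3 := EW.lie_mem 1 (m : ℤ) x hx p.2.2 (ih hp).2.2
    have hc : (1 : ℤ) + (m : ℤ) = ((m + 1 : ℕ) : ℤ) := by push_cast; ring
    rw [hc] at h1 h2 h3
    exact ⟨h1, h2, h3⟩

lemma h0_apply (u : ↥(EUW.grading 0)) :
    h0 A EU EW EUW e u = ((u : MUW), (((e u).1 : MU), ((e u).2 : MW))) := rfl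

/-- membership of `A.ιg a` in degree 0 of `L` -/
lemma iota_mem0 (a : g) : A.ιg a ∈ A.grading 0 := by
  rw [← A.ιg_range]; exact ⟨a, rfl⟩

include he in
/-- closure of the graphs under the action of degree 0 of `L` -/
lemma S17_lie0 : ∀ m : ℕ, ∀ x ∈ A.grading 0, ∀ p ∈ S17 A EU EW EUW e m,
    ⁅x, p⁆ ∈ S17 A EU EW EUW e m := by
  intro m
  induction m with
  | zero =>
    intro x hx p hp
    rw [← A.ιg_range] at hx
    obtain ⟨a, rfl⟩ := hx
    obtain ⟨u, rfl⟩ := hp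
    have hmem : ⁅A.ιg a, (u : MUW)⁆ ∈ EUW.grading 0 := by
      have := EUW.lie_mem 0 0 (A.ιg a) (iota_mem0 A a) (u : MUW) u.2
      norm_num at this; exact this
    have hhe := he a u hmem
    rw [Prod.mk.injEq] at hhe
    refine ⟨⟨⁅A.ιg a, (u : MUW)⁆, hmem⟩, ?_⟩
    rw [h0_apply, brkP, h0_apply]
    simp only [hhe.1, hhe.2]
  | succ m ih =>
    intro x hx p hp
    have key : Submodule.map (LieModule.toEnd k L (MUW × (MU × MW)) x)
        (S17 A EU EW EUW e (m+1)) ≤ S17 A EU EW EUW e (m+1) := by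
      rw [S17_succ A EU EW EUW e, Submodule.map_span, Submodule.span_le]
      rintro w ⟨w', ⟨y, hy, q, hq, rfl⟩, rfl⟩
      have hxy : ⁅x, y⁆ ∈ A.grading 1 := by
        have := A.lie_mem 0 1 x hx y hy
        norm_num at this; exact this
      have h1 : ⁅⁅x, y⁆, q⁆ ∈ S17 A EU EW EUW e (m+1) := by
        rw [S17_succ A EU EW EUW e]
        exact Submodule.subset_span ⟨⁅x, y⁆, hxy, q, hq, rfl⟩
      have h2 : ⁅y, ⁅x, q⁆⁆ ∈ S17 A EU EW EUW e (m+1) := by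
        rw [S17_succ A EU EW EUW e]
        exact Submodule.subset_span ⟨y, hy, ⁅x, q⁆, ih x hx q hq, rfl⟩
      have : LieModule.toEnd k L (MUW × (MU × MW)) x ⁅y, q⁆ = ⁅x, ⁅y, q⁆⁆ := rfl
      rw [this, leibniz_lie]
      exact Submodule.add_mem _ h1 h2
    exact key ⟨p, hp, rfl⟩

include he in
/-- the degree `-1` part of `L` kills the degree-0 graph -/
lemma S17_lieNeg0 : ∀ y ∈ A.grading (-1), ∀ p ∈ S17 A EU EW EUW e 0, ⁅y, p⁆ = 0 := by
  intro y hy p hp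
  obtain ⟨u, rfl⟩ := hp
  rw [h0_apply, brkP]
  have h1 : ⁅y, (u : MUW)⁆ ∈ EUW.grading (-1) := by
    have := EUW.lie_mem (-1) 0 y hy (u : MUW) u.2
    norm_num at this; exact this
  have h2 : ⁅y, ((e u).1 : MU)⁆ ∈ EU.grading (-1) := by
    have := EU.lie_mem (-1) 0 y hy ((e u).1 : MU) (e u).1.2
    norm_num at this; exact this
  have h3 : ⁅y, ((e u).2 : MW)⁆ ∈ EW.grading (-1) := by
    have := EW.lie_mem (-1) 0 y hy ((e u).2 : MW) (e u).2.2
    norm_num at this; exact this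
  rw [EUW.zero_of_neg (-1) (by norm_num)] at h1
  rw [EU.zero_of_neg (-1) (by norm_num)] at h2
  rw [EW.zero_of_neg (-1) (by norm_num)] at h3
  simp only [Submodule.mem_bot] at h1 h2 h3
  simp [h1, h2, h3, Prod.ext_iff]

include he in
/-- the degree `-1` part of `L` lowers the graph degree by one -/
lemma S17_lieNeg : ∀ m : ℕ, ∀ y ∈ A.grading (-1), ∀ p ∈ S17 A EU EW EUW e (m+1),
    ⁅y, p⁆ ∈ S17 A EU EW EUW e m := by
  intro m
  induction m with
  | zero =>
    intro y hy p hp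
    have key : Submodule.map (LieModule.toEnd k L (MUW × (MU × MW)) y)
        (S17 A EU EW EUW e 1) ≤ S17 A EU EW EUW e 0 := by
      rw [S17_succ A EU EW EUW e, Submodule.map_span, Submodule.span_le]
      rintro w ⟨w', ⟨x, hx, q, hq, rfl⟩, rfl⟩
      have hyx : ⁅y, x⁆ ∈ A.grading 0 := by
        have := A.lie_mem (-1) 1 y hy x hx
        norm_num at this; exact this
      have : LieModule.toEnd k L (MUW × (MU × MW)) y ⁅x, q⁆ = ⁅y, ⁅x, q⁆⁆ := rfl
      rw [this, leibniz_lie]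
      have h1 : ⁅⁅y, x⁆, q⁆ ∈ S17 A EU EW EUW e 0 :=
        S17_lie0 A EU EW EUW e he 0 ⁅y, x⁆ hyx q hq
      have h2 : ⁅y, q⁆ = 0 := S17_lieNeg0 A EU EW EUW e he y hy q hq
      rw [h2, lie_zero, add_zero]
      exact h1
    exact key ⟨p, hp, rfl⟩
  | succ m ih =>
    intro y hy p hp
    have key : Submodule.map (LieModule.toEnd k L (MUW × (MU × MW)) y)
        (S17 A EU EW EUW e (m+1+1)) ≤ S17 A EU EW EUW e (m+1) := by
      rw [S17_succ A EU EW EUW e, Submodule.map_span, Submodule.span_le]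
      rintro w ⟨w', ⟨x, hx, q, hq, rfl⟩, rfl⟩
      have hyx : ⁅y, x⁆ ∈ A.grading 0 := by
        have := A.lie_mem (-1) 1 y hy x hx
        norm_num at this; exact this
      have : LieModule.toEnd k L (MUW × (MU × MW)) y ⁅x, q⁆ = ⁅y, ⁅x, q⁆⁆ := rfl
      rw [this, leibniz_lie]
      have h1 : ⁅⁅y, x⁆, q⁆ ∈ S17 A EU EW EUW e (m+1) :=
        S17_lie0 A EU EW EUW e he (m+1) ⁅y, x⁆ hyx q hq
      have h2 : ⁅x, ⁅y, q⁆⁆ ∈ S17 A EU EW EUW e (m+1) := by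
        rw [S17_succ A EU EW EUW e]
        exact Submodule.subset_span ⟨x, hx, ⁅y, q⁆, ih y hy q hq, rfl⟩
      exact Submodule.add_mem _ h1 h2
    exact key ⟨p, hp, rfl⟩

lemma S17_zero : S17 A EU EW EUW e 0 = LinearMap.range (h0 A EU EW EUW e) := rfl

include he in
lemma S17_func : ∀ m : ℕ, ∀ p ∈ S17 A EU EW EUW e m,
    (p.1 = 0 → p.2 = 0) ∧ (p.2 = 0 → p.1 = 0) := by
  intro m
  induction m with
  | zero =>
    rintro p ⟨u, rfl⟩
    rw [h0_apply]
    constructor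
    · intro h1
      have hu : u = 0 := Subtype.ext h1
      simp [hu]
    · intro h2
      have ha : ((e u).1 : MU) = 0 := congrArg Prod.fst h2
      have hb : ((e u).2 : MW) = 0 := congrArg Prod.snd h2
      have heu : e u = 0 := by
        rw [Prod.ext_iff]
        exact ⟨Subtype.ext ha, Subtype.ext hb⟩
      have hu : u = 0 := by
        have := congrArg e.symm heu
        simpa using this
      simp [hu]
  | succ m ih =>
    intro p hp
    have hQ := S17_le A EU EW EUW e (m+1) hp
    have hm1 : (1:ℤ) ≤ ((m+1 : ℕ) : ℤ) := by exact_mod_cast Nat.succ_le_succ (Nat.zero_le m)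
    constructor
    · intro h1
      have key : ∀ y ∈ A.grading (-1), ⁅y, p.2.1⁆ = 0 ∧ ⁅y, p.2.2⁆ = 0 := by
        intro y hy
        have hmem := S17_lieNeg A EU EW EUW e he m y hy p hp
        have hfst : (⁅y, p⁆ : MUW × (MU × MW)).1 = 0 := by
          show ⁅y, p.1⁆ = 0
          rw [h1, lie_zero]
        have hsnd := (ih ⁅y, p⁆ hmem).1 hfst
        exact ⟨congrArg Prod.fst hsnd, congrArg Prod.snd hsnd⟩
      have hU : p.2.1 = 0 :=
        EU.transitive ((m+1 : ℕ) : ℤ) hm1 p.2.1 hQ.2.1 (fun y hy => (key y hy).1)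
      have hW : p.2.2 = 0 :=
        EW.transitive ((m+1 : ℕ) : ℤ) hm1 p.2.2 hQ.2.2 (fun y hy => (key y hy).2)
      rw [Prod.ext_iff]
      exact ⟨hU, hW⟩
    · intro h2
      have key : ∀ y ∈ A.grading (-1), ⁅y, p.1⁆ = 0 := by
        intro y hy
        have hmem := S17_lieNeg A EU EW EUW e he m y hy p hp
        have ha : p.2.1 = 0 := congrArg Prod.fst h2
        have hb : p.2.2 = 0 := congrArg Prod.snd h2
        have hsnd : (⁅y, p⁆ : MUW × (MU × MW)).2 = 0 := by
          show (⁅y, p.2.1⁆, ⁅y, p.2.2⁆) = 0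
          rw [ha, hb, lie_zero, lie_zero]
          rfl
        exact (ih ⁅y, p⁆ hmem).2 hsnd
      exact EUW.transitive ((m+1 : ℕ) : ℤ) hm1 p.1 hQ.1 key

lemma S17_fst : ∀ m : ℕ, Submodule.map (LinearMap.fst k MUW (MU × MW)) (S17 A EU EW EUW e m)
    = EUW.grading (m : ℤ) := by
  intro m
  induction m with
  | zero =>
    rw [S17_zero, ← LinearMap.range_comp]
    have : (LinearMap.fst k MUW (MU × MW)).comp (h0 A EU EW EUW e)
        = (EUW.grading 0).subtype := by
      ext u; rfl
    rw [this, Submodule.range_subtype]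
    norm_num
  | succ m ih =>
    rw [S17_succ A EU EW EUW e, Submodule.map_span]
    have hset : (LinearMap.fst k MUW (MU × MW)) ''
        {w | ∃ x ∈ A.grading 1, ∃ p ∈ S17 A EU EW EUW e m, w = ⁅x, p⁆}
        = {w : MUW | ∃ x ∈ A.grading 1, ∃ u ∈ EUW.grading (m : ℤ), w = ⁅x, u⁆} := by
      ext w
      constructor
      · rintro ⟨w', ⟨x, hx, p, hp, rfl⟩, rfl⟩
        refine ⟨x, hx, p.1, ?_, rfl⟩
        rw [← ih]
        exact ⟨p, hp, rfl⟩
      · rintro ⟨x, hx, u, hu, rfl⟩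
        rw [← ih] at hu
        obtain ⟨p, hp, rfl⟩ := hu
        exact ⟨⁅x, p⁆, ⟨x, hx, p, hp, rfl⟩, rfl⟩
    rw [hset]
    have hc : ((m+1 : ℕ) : ℤ) = (m : ℤ) + 1 := by push_cast; ring
    rw [hc, EUW.span_step (m : ℤ) (Int.natCast_nonneg m)]

lemma S17_snd : ∀ m : ℕ, Submodule.map (LinearMap.snd k MUW (MU × MW)) (S17 A EU EW EUW e m)
    = (EU.grading (m : ℤ)).prod (EW.grading (m : ℤ)) := by
  intro m
  induction m with
  | zero =>
    rw [S17_zero, ← LinearMap.range_comp]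
    have h1 : (LinearMap.snd k MUW (MU × MW)).comp (h0 A EU EW EUW e)
        = ((EU.grading 0).subtype.prodMap (EW.grading 0).subtype) ∘ₗ e.toLinearMap := by
      ext u <;> rfl
    rw [h1, LinearMap.range_comp, LinearEquiv.range, Submodule.map_top]
    have h2 : LinearMap.range ((EU.grading 0).subtype.prodMap (EW.grading 0).subtype)
        = (EU.grading 0).prod (EW.grading 0) := by
      ext q
      constructor
      · rintro ⟨⟨a, b⟩, rfl⟩
        exact ⟨a.2, b.2⟩
      · rintro ⟨ha, hb⟩
        exact ⟨(⟨q.1, ha⟩, ⟨q.2, hb⟩), rfl⟩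
    rw [h2]
    norm_num
  | succ m ih =>
    rw [S17_succ A EU EW EUW e, Submodule.map_span]
    have hc : ((m+1 : ℕ) : ℤ) = (m : ℤ) + 1 := by push_cast; ring
    apply le_antisymm
    · rw [Submodule.span_le]
      rintro w ⟨w', ⟨x, hx, p, hp, rfl⟩, rfl⟩
      have hQ := S17_le A EU EW EUW e m hp
      have h1 := EU.lie_mem 1 (m : ℤ) x hx p.2.1 hQ.2.1
      have h2 := EW.lie_mem 1 (m : ℤ) x hx p.2.2 hQ.2.2
      have hcc : (1 : ℤ) + (m : ℤ) = ((m+1 : ℕ) : ℤ) := by push_cast; ring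
      rw [hcc] at h1 h2
      exact ⟨h1, h2⟩
    · intro q hq
      have hsplit : q = ((q.1, (0:MW)) : MU × MW) + (((0:MU), q.2) : MU × MW) := by
        rw [Prod.ext_iff]; simp
      rw [hsplit]
      apply Submodule.add_mem
      · have ha : q.1 ∈ EU.grading ((m+1 : ℕ) : ℤ) := hq.1
        rw [hc, EU.span_step (m : ℤ) (Int.natCast_nonneg m)] at ha
        have hle : {w : MU | ∃ x ∈ A.grading 1, ∃ u ∈ EU.grading (m : ℤ), w = ⁅x, u⁆}
            ⊆ Submodule.comap (LinearMap.inl k MU MW)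
              (Submodule.span k ((LinearMap.snd k MUW (MU × MW)) ''
                {w | ∃ x ∈ A.grading 1, ∃ p ∈ S17 A EU EW EUW e m, w = ⁅x, p⁆})) := by
          rintro w ⟨x, hx, u, hu, rfl⟩
          have hu' : ((u, (0:MW)) : MU × MW) ∈ (EU.grading (m : ℤ)).prod (EW.grading (m : ℤ)) :=
            ⟨hu, Submodule.zero_mem _⟩
          rw [← ih] at hu'
          obtain ⟨p, hp, hp2⟩ := hu'
          apply Submodule.subset_span
          refine ⟨⁅x, p⁆, ⟨x, hx, p, hp, rfl⟩, ?_⟩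
          have h21 : p.2.1 = u := congrArg Prod.fst hp2
          have h22 : p.2.2 = (0:MW) := congrArg Prod.snd hp2
          show (⁅x, p.2.1⁆, ⁅x, p.2.2⁆) = ((⁅x, u⁆, (0:MW)) : MU × MW)
          rw [h21, h22, lie_zero]
        exact (Submodule.span_le.mpr hle) ha
      · have hb : q.2 ∈ EW.grading ((m+1 : ℕ) : ℤ) := hq.2
        rw [hc, EW.span_step (m : ℤ) (Int.natCast_nonneg m)] at hb
        have hle : {w : MW | ∃ x ∈ A.grading 1, ∃ u ∈ EW.grading (m : ℤ), w = ⁅x, u⁆}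
            ⊆ Submodule.comap (LinearMap.inr k MU MW)
              (Submodule.span k ((LinearMap.snd k MUW (MU × MW)) ''
                {w | ∃ x ∈ A.grading 1, ∃ p ∈ S17 A EU EW EUW e m, w = ⁅x, p⁆})) := by
          rintro w ⟨x, hx, u, hu, rfl⟩
          have hu' : (((0:MU), u) : MU × MW) ∈ (EU.grading (m : ℤ)).prod (EW.grading (m : ℤ)) :=
            ⟨Submodule.zero_mem _, hu⟩
          rw [← ih] at hu'
          obtain ⟨p, hp, hp2⟩ := hu'
          apply Submodule.subset_span
          refine ⟨⁅x, p⁆, ⟨x, hx, p, hp, rfl⟩, ?_⟩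
          have h21 : p.2.1 = (0:MU) := congrArg Prod.fst hp2
          have h22 : p.2.2 = u := congrArg Prod.snd hp2
          show (⁅x, p.2.1⁆, ⁅x, p.2.2⁆) = (((0:MU), ⁅x, u⁆) : MU × MW)
          rw [h21, h22, lie_zero]
        exact (Submodule.span_le.mpr hle) hb

/-- ℤ-indexed graph submodules -/
noncomputable def SZ (n : ℤ) : Submodule k (MUW × (MU × MW)) :=
  if 0 ≤ n then S17 A EU EW EUW e n.toNat else ⊥

lemma SZ_le (n : ℤ) : SZ A EU EW EUW e n ≤ Qgrad A EU EW EUW n := by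
  unfold SZ
  split_ifs with h
  · have := S17_le A EU EW EUW e n.toNat
    rwa [Int.toNat_of_nonneg h] at this
  · exact bot_le

include he in
lemma SZ_func (n : ℤ) : ∀ p ∈ SZ A EU EW EUW e n,
    (p.1 = 0 → p.2 = 0) ∧ (p.2 = 0 → p.1 = 0) := by
  intro p hp
  unfold SZ at hp
  split_ifs at hp with h
  · exact S17_func A EU EW EUW e he n.toNat p hp
  · have : p = 0 := (Submodule.mem_bot k).mp hp
    subst this
    exact ⟨fun _ => rfl, fun _ => rfl⟩

lemma SZ_fst (n : ℤ) : Submodule.map (LinearMap.fst k MUW (MU × MW)) (SZ A EU EW EUW e n)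
    = EUW.grading n := by
  unfold SZ
  split_ifs with h
  · have := S17_fst A EU EW EUW e n.toNat
    rwa [Int.toNat_of_nonneg h] at this
  · rw [EUW.zero_of_neg n (by omega), Submodule.map_bot]

lemma SZ_snd (n : ℤ) : Submodule.map (LinearMap.snd k MUW (MU × MW)) (SZ A EU EW EUW e n)
    = (EU.grading n).prod (EW.grading n) := by
  unfold SZ
  split_ifs with h
  · have := S17_snd A EU EW EUW e n.toNat
    rwa [Int.toNat_of_nonneg h] at this
  · rw [EU.zero_of_neg n (by omega), EW.zero_of_neg n (by omega), Submodule.map_bot]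
    ext q
    simp [Submodule.mem_prod, Prod.ext_iff]

include he in
lemma SZ_lie0 (n : ℤ) : ∀ x ∈ A.grading 0, ∀ p ∈ SZ A EU EW EUW e n,
    ⁅x, p⁆ ∈ SZ A EU EW EUW e n := by
  intro x hx p hp
  unfold SZ at hp ⊢
  split_ifs with h
  · rw [if_pos h] at hp
    exact S17_lie0 A EU EW EUW e he n.toNat x hx p hp
  · rw [if_neg h] at hp
    have : p = 0 := (Submodule.mem_bot k).mp hp
    subst this
    simp

include he in
lemma SZ_lie1 (n : ℤ) : ∀ x ∈ A.grading 1, ∀ p ∈ SZ A EU EW EUW e n,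
    ⁅x, p⁆ ∈ SZ A EU EW EUW e (n+1) := by
  intro x hx p hp
  unfold SZ at hp ⊢
  split_ifs at hp with h
  · rw [if_pos (by omega : (0:ℤ) ≤ n + 1)]
    have htn : (n+1).toNat = n.toNat + 1 := by omega
    rw [htn, S17_succ A EU EW EUW e]
    exact Submodule.subset_span ⟨x, hx, p, hp, rfl⟩
  · have : p = 0 := (Submodule.mem_bot k).mp hp
    subst this
    split_ifs <;> simp

include he in
lemma SZ_lieNeg (n : ℤ) : ∀ y ∈ A.grading (-1), ∀ p ∈ SZ A EU EW EUW e n,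
    ⁅y, p⁆ ∈ SZ A EU EW EUW e (n-1) := by
  intro y hy p hp
  unfold SZ at hp ⊢
  split_ifs at hp with h
  · by_cases h1 : 1 ≤ n
    · rw [if_pos (by omega : (0:ℤ) ≤ n - 1)]
      have htn : n.toNat = (n-1).toNat + 1 := by omega
      rw [htn] at hp
      exact S17_lieNeg A EU EW EUW e he (n-1).toNat y hy p hp
    · have hn0 : n = 0 := by omega
      subst hn0
      have : ⁅y, p⁆ = 0 := S17_lieNeg0 A EU EW EUW e he y hy p hp
      rw [this]
      split_ifs <;> simp
  · have : p = 0 := (Submodule.mem_bot k).mp hp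
    subst this
    split_ifs <;> simp

/-- projection of the degree-`n` graph onto the degree-`n` part of `MUW` -/
noncomputable def piZ (n : ℤ) : ↥(SZ A EU EW EUW e n) →ₗ[k] ↥(EUW.grading n) :=
  LinearMap.codRestrict (EUW.grading n)
    ((LinearMap.fst k MUW (MU × MW)) ∘ₗ (SZ A EU EW EUW e n).subtype)
    (fun p => (SZ_le A EU EW EUW e n p.2).1)

include he in
lemma piZ_bij (n : ℤ) : Function.Bijective (piZ A EU EW EUW e n) := by
  constructor
  · intro p q hpq
    have h : ((p : MUW × (MU × MW))).1 = ((q : MUW × (MU × MW))).1 :=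
      congrArg Subtype.val hpq
    have hmem : ((p : MUW × (MU × MW)) - (q : MUW × (MU × MW))) ∈ SZ A EU EW EUW e n :=
      Submodule.sub_mem _ p.2 q.2
    have h1 : ((p : MUW × (MU × MW)) - (q : MUW × (MU × MW))).1 = 0 := by
      show ((p : MUW × (MU × MW))).1 - ((q : MUW × (MU × MW))).1 = 0
      rw [h, sub_self]
    have h2 := (SZ_func A EU EW EUW e he n _ hmem).1 h1
    apply Subtype.ext
    have h3 : ((p : MUW × (MU × MW)) - (q : MUW × (MU × MW))) = 0 :=
      Prod.ext_iff.mpr ⟨h1, h2⟩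
    exact sub_eq_zero.mp h3
  · intro u
    have hmap := SZ_fst A EU EW EUW e n
    have hu : (u : MUW) ∈ Submodule.map (LinearMap.fst k MUW (MU × MW))
        (SZ A EU EW EUW e n) := by rw [hmap]; exact u.2
    obtain ⟨p, hp, hpu⟩ := hu
    exact ⟨⟨p, hp⟩, Subtype.ext hpu⟩

include he in
/-- the degree-`n` component of the comparison map -/
noncomputable def GrF (n : ℤ) : ↥(EUW.grading n) →ₗ[k] MU × MW :=
  ((LinearMap.snd k MUW (MU × MW)) ∘ₗ (SZ A EU EW EUW e n).subtype) ∘ₗ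
    (LinearEquiv.ofBijective (piZ A EU EW EUW e n)
      (piZ_bij A EU EW EUW e he n)).symm.toLinearMap

include he in
lemma GrF_graph (n : ℤ) (x : ↥(EUW.grading n)) :
    ((x : MUW), GrF A EU EW EUW e he n x) ∈ SZ A EU EW EUW e n := by
  set p := (LinearEquiv.ofBijective (piZ A EU EW EUW e n)
    (piZ_bij A EU EW EUW e he n)).symm x with hp
  have h1 : piZ A EU EW EUW e n p = x := by
    rw [hp]
    exact (LinearEquiv.ofBijective (piZ A EU EW EUW e n)
      (piZ_bij A EU EW EUW e he n)).apply_symm_apply x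
  have h2 : ((p : MUW × (MU × MW))).1 = (x : MUW) := congrArg Subtype.val h1
  have h3 : GrF A EU EW EUW e he n x = ((p : MUW × (MU × MW))).2 := rfl
  rw [h3, ← h2]
  exact p.2

include he in
lemma GrF_uniq (n : ℤ) (w : MUW) (q : MU × MW) (hw : w ∈ EUW.grading n)
    (hq : (w, q) ∈ SZ A EU EW EUW e n) : q = GrF A EU EW EUW e he n ⟨w, hw⟩ := by
  have h1 := GrF_graph A EU EW EUW e he n ⟨w, hw⟩
  have hmem : (((w, q) : MUW × (MU × MW)) - ((w, GrF A EU EW EUW e he n ⟨w, hw⟩)))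
      ∈ SZ A EU EW EUW e n := Submodule.sub_mem _ hq h1
  have hfst : ((((w, q) : MUW × (MU × MW)) - ((w, GrF A EU EW EUW e he n ⟨w, hw⟩)))).1 = 0 := by
    show w - w = 0
    rw [sub_self]
  have h2 := (SZ_func A EU EW EUW e he n _ hmem).1 hfst
  have h3 : q - GrF A EU EW EUW e he n ⟨w, hw⟩ = 0 := h2
  exact sub_eq_zero.mp h3

include he in
/-- the comparison map `MUW → MU × MW` -/
noncomputable def FF : MUW →ₗ[k] MU × MW :=
  (DirectSum.toModule k ℤ (MU × MW) (fun n => GrF A EU EW EUW e he n)) ∘ₗ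
    (LinearEquiv.ofBijective (DirectSum.coeLinearMap EUW.grading)
      EUW.isInternal).symm.toLinearMap

include he in
lemma FF_apply_coe (n : ℤ) (x : ↥(EUW.grading n)) :
    FF A EU EW EUW e he (x : MUW) = GrF A EU EW EUW e he n x := by
  have h1 : (x : MUW) = (LinearEquiv.ofBijective (DirectSum.coeLinearMap EUW.grading)
      EUW.isInternal) (DirectSum.lof k ℤ (fun i => ↥(EUW.grading i)) n x) := by
    show _ = DirectSum.coeLinearMap EUW.grading _
    rw [DirectSum.lof_eq_of, DirectSum.coeLinearMap_of]
  show (DirectSum.toModule k ℤ (MU × MW) (fun n => GrF A EU EW EUW e he n))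
      ((LinearEquiv.ofBijective (DirectSum.coeLinearMap EUW.grading)
        EUW.isInternal).symm (x : MUW)) = _
  rw [h1, LinearEquiv.symm_apply_apply, DirectSum.toModule_lof]

include he in
lemma FF_graph (n : ℤ) (w : MUW) (hw : w ∈ EUW.grading n) :
    ((w, FF A EU EW EUW e he w) : MUW × (MU × MW)) ∈ SZ A EU EW EUW e n := by
  have := GrF_graph A EU EW EUW e he n ⟨w, hw⟩
  rwa [← FF_apply_coe A EU EW EUW e he n ⟨w, hw⟩] at this

include he in
lemma FF_uniq (n : ℤ) (w : MUW) (q : MU × MW) (hw : w ∈ EUW.grading n)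
    (hq : ((w, q) : MUW × (MU × MW)) ∈ SZ A EU EW EUW e n) :
    FF A EU EW EUW e he w = q := by
  rw [GrF_uniq A EU EW EUW e he n w q hw hq]
  exact (FF_apply_coe A EU EW EUW e he n ⟨w, hw⟩)

include he in
lemma FF_equiv_piece (d : ℤ) (hd : d = 0 ∨ d = 1 ∨ d = -1) (x : L) (hx : x ∈ A.grading d)
    (w : MUW) : FF A EU EW EUW e he ⁅x, w⁆ = ⁅x, FF A EU EW EUW e he w⁆ := by
  set φ : MUW →ₗ[k] MU × MW :=
    (FF A EU EW EUW e he) ∘ₗ (LieModule.toEnd k L MUW x)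
      - (LieModule.toEnd k L (MU × MW) x) ∘ₗ (FF A EU EW EUW e he) with hφ
  have hker : ∀ n : ℤ, EUW.grading n ≤ LinearMap.ker φ := by
    intro n w' hw'
    rw [LinearMap.mem_ker, hφ]
    have hpair := FF_graph A EU EW EUW e he n w' hw'
    have hsimp : φ w' = FF A EU EW EUW e he ⁅x, w'⁆ - ⁅x, FF A EU EW EUW e he w'⁆ := rfl
    rw [hsimp, sub_eq_zero]
    rcases hd with rfl | rfl | rfl
    · have h1 := SZ_lie0 A EU EW EUW e he n x hx _ hpair
      have h2 := EUW.lie_mem 0 n x hx w' hw'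
      rw [zero_add] at h2
      exact FF_uniq A EU EW EUW e he n ⁅x, w'⁆ ⁅x, FF A EU EW EUW e he w'⁆ h2 h1
    · have h1 := SZ_lie1 A EU EW EUW e he n x hx _ hpair
      have h2 := EUW.lie_mem 1 n x hx w' hw'
      rw [add_comm] at h2
      exact FF_uniq A EU EW EUW e he (n+1) ⁅x, w'⁆ ⁅x, FF A EU EW EUW e he w'⁆ h2 h1
    · have h1 := SZ_lieNeg A EU EW EUW e he n x hx _ hpair
      have h2 := EUW.lie_mem (-1) n x hx w' hw'
      have hc : (-1) + n = n - 1 := by ring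
      rw [hc] at h2
      exact FF_uniq A EU EW EUW e he (n-1) ⁅x, w'⁆ ⁅x, FF A EU EW EUW e he w'⁆ h2 h1
  have htop : (⊤ : Submodule k MUW) ≤ LinearMap.ker φ := by
    rw [← EUW.isInternal.submodule_iSup_eq_top]
    exact iSup_le hker
  have := htop (Submodule.mem_top (x := w))
  rw [LinearMap.mem_ker, hφ] at this
  have hsimp : φ w = FF A EU EW EUW e he ⁅x, w⁆ - ⁅x, FF A EU EW EUW e he w⁆ := rfl
  rw [hφ] at hsimp
  rw [hsimp] at this
  exact sub_eq_zero.mp this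

include he in
lemma FF_equiv (x : L) (w : MUW) :
    FF A EU EW EUW e he ⁅x, w⁆ = ⁅x, FF A EU EW EUW e he w⁆ := by
  let T : Submodule k L :=
  { carrier := {x | ∀ w : MUW, FF A EU EW EUW e he ⁅x, w⁆ = ⁅x, FF A EU EW EUW e he w⁆}
    add_mem' := by
      intro a b ha hb w
      rw [add_lie, add_lie, map_add, ha w, hb w]
    zero_mem' := by
      intro w
      rw [zero_lie, zero_lie, map_zero]
    smul_mem' := by
      intro c a ha w
      rw [smul_lie, smul_lie, map_smul, ha w] }
  have hbr : ∀ a ∈ T, ∀ b ∈ T, ⁅a, b⁆ ∈ T := by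
    intro a ha b hb w
    rw [lie_lie, map_sub, ha ⁅b, w⁆, hb ⁅a, w⁆, hb w, ha w, ← lie_lie]
  have h0 : A.grading 0 ≤ T := fun z hz w =>
    FF_equiv_piece A EU EW EUW e he 0 (Or.inl rfl) z hz w
  have h1 : A.grading 1 ≤ T := fun z hz w =>
    FF_equiv_piece A EU EW EUW e he 1 (Or.inr (Or.inl rfl)) z hz w
  have hm1 : A.grading (-1) ≤ T := fun z hz w =>
    FF_equiv_piece A EU EW EUW e he (-1) (Or.inr (Or.inr rfl)) z hz w
  have hpos : ∀ m : ℕ, A.grading ((m : ℤ) + 1) ≤ T := by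
    intro m
    induction m with
    | zero => simpa using h1
    | succ m ih =>
      have hc : ((m + 1 : ℕ) : ℤ) + 1 = ((m : ℤ) + 1) + 1 := by push_cast; ring
      rw [hc, A.span_pos ((m : ℤ) + 1) (by omega)]
      rw [Submodule.span_le]
      rintro z ⟨x', hx', y', hy', rfl⟩
      exact hbr x' (h1 hx') y' (ih hy')
  have hneg : ∀ m : ℕ, A.grading (-(m : ℤ) - 1) ≤ T := by
    intro m
    induction m with
    | zero => simpa using hm1
    | succ m ih =>
      have hc : (-((m + 1 : ℕ) : ℤ) - 1) = -((m : ℤ) + 1) - 1 := by push_cast; ring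
      rw [hc, A.span_neg ((m : ℤ) + 1) (by omega)]
      rw [Submodule.span_le]
      rintro z ⟨x', hx', y', hy', rfl⟩
      have hc2 : -((m : ℤ) + 1) = -(m : ℤ) - 1 := by ring
      rw [hc2] at hy'
      exact hbr x' (hm1 hx') y' (ih hy')
  have hg : ∀ n : ℤ, A.grading n ≤ T := by
    intro n
    rcases n with m | m
    · rcases m with _ | m
      · exact h0
      · have : ((Int.ofNat (m+1)) : ℤ) = ((m : ℤ) + 1) := by
          rw [Int.ofNat_eq_natCast]; push_cast; ring
        rw [this]
        exact hpos m
    · have : (Int.negSucc m : ℤ) = -(m : ℤ) - 1 := by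
        rw [Int.negSucc_eq]; push_cast; ring
      rw [this]
      exact hneg m
  have htop : (⊤ : Submodule k L) ≤ T := by
    rw [← A.isInternal.submodule_iSup_eq_top]
    exact iSup_le hg
  exact htop (Submodule.mem_top (x := x)) w

include he in
lemma GrF_inj (n : ℤ) : Function.Injective (GrF A EU EW EUW e he n) := by
  intro x y hxy
  have h1 := GrF_graph A EU EW EUW e he n x
  have h2 := GrF_graph A EU EW EUW e he n y
  rw [hxy] at h1
  have hmem : ((((x : MUW), GrF A EU EW EUW e he n y) : MUW × (MU × MW))
      - (((y : MUW), GrF A EU EW EUW e he n y))) ∈ SZ A EU EW EUW e n :=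
    Submodule.sub_mem _ h1 h2
  have hsnd : ((((x : MUW), GrF A EU EW EUW e he n y) : MUW × (MU × MW))
      - (((y : MUW), GrF A EU EW EUW e he n y))).2 = 0 := by
    show GrF A EU EW EUW e he n y - GrF A EU EW EUW e he n y = 0
    rw [sub_self]
  have hfst := (SZ_func A EU EW EUW e he n _ hmem).2 hsnd
  have : (x : MUW) - (y : MUW) = 0 := hfst
  exact Subtype.ext (sub_eq_zero.mp this)

include he in
/-- the `MU`-component of `GrF`, corestricted to the grading -/
noncomputable def GU (n : ℤ) : ↥(EUW.grading n) →ₗ[k] ↥(EU.grading n) :=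
  LinearMap.codRestrict (EU.grading n)
    ((LinearMap.fst k MU MW) ∘ₗ GrF A EU EW EUW e he n)
    (fun x => (SZ_le A EU EW EUW e n (GrF_graph A EU EW EUW e he n x)).2.1)

include he in
/-- the `MW`-component of `GrF`, corestricted to the grading -/
noncomputable def GW (n : ℤ) : ↥(EUW.grading n) →ₗ[k] ↥(EW.grading n) :=
  LinearMap.codRestrict (EW.grading n)
    ((LinearMap.snd k MU MW) ∘ₗ GrF A EU EW EUW e he n)
    (fun x => (SZ_le A EU EW EUW e n (GrF_graph A EU EW EUW e he n x)).2.2)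

include he in
lemma sum_fst (d : DirectSum ℤ (fun n => ↥(EUW.grading n))) :
    DirectSum.coeLinearMap EU.grading
      (DFinsupp.mapRange (fun n => ⇑(GU A EU EW EUW e he n))
        (fun n => map_zero (GU A EU EW EUW e he n)) d)
    = (DirectSum.toModule k ℤ (MU × MW) (fun n => GrF A EU EW EUW e he n) d).1 := by
  induction d using DirectSum.induction_on with
  | zero => simp
  | of n x =>
    have h1 : (DFinsupp.mapRange (fun n => ⇑(GU A EU EW EUW e he n))
        (fun n => map_zero (GU A EU EW EUW e he n))
        (DirectSum.of (fun i => ↥(EUW.grading i)) n x))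
        = DirectSum.of (fun i => ↥(EU.grading i)) n (GU A EU EW EUW e he n x) :=
      DFinsupp.mapRange_single
    rw [h1, DirectSum.coeLinearMap_of, ← DirectSum.lof_eq_of k, DirectSum.toModule_lof]
    rfl
  | add a b ha hb =>
    rw [DFinsupp.mapRange_add _ _ (fun n x y => map_add (GU A EU EW EUW e he n) x y),
      map_add, map_add, ha, hb]
    rfl

include he in
lemma sum_snd (d : DirectSum ℤ (fun n => ↥(EUW.grading n))) :
    DirectSum.coeLinearMap EW.grading
      (DFinsupp.mapRange (fun n => ⇑(GW A EU EW EUW e he n))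
        (fun n => map_zero (GW A EU EW EUW e he n)) d)
    = (DirectSum.toModule k ℤ (MU × MW) (fun n => GrF A EU EW EUW e he n) d).2 := by
  induction d using DirectSum.induction_on with
  | zero => simp
  | of n x =>
    have h1 : (DFinsupp.mapRange (fun n => ⇑(GW A EU EW EUW e he n))
        (fun n => map_zero (GW A EU EW EUW e he n))
        (DirectSum.of (fun i => ↥(EUW.grading i)) n x))
        = DirectSum.of (fun i => ↥(EW.grading i)) n (GW A EU EW EUW e he n x) :=
      DFinsupp.mapRange_single
    rw [h1, DirectSum.coeLinearMap_of, ← DirectSum.lof_eq_of k, DirectSum.toModule_lof]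
    rfl
  | add a b ha hb =>
    rw [DFinsupp.mapRange_add _ _ (fun n x y => map_add (GW A EU EW EUW e he n) x y),
      map_add, map_add, ha, hb]
    rfl

include he in
lemma FF_inj : Function.Injective (FF A EU EW EUW e he) := by
  intro u v huv
  have hsub : FF A EU EW EUW e he (u - v) = 0 := by rw [map_sub, huv, sub_self]
  set E1 := LinearEquiv.ofBijective (DirectSum.coeLinearMap EUW.grading) EUW.isInternal with hE1
  set d := E1.symm (u - v) with hd
  have htm : DirectSum.toModule k ℤ (MU × MW) (fun n => GrF A EU EW EUW e he n) d = 0 := hsub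
  have hU : DirectSum.coeLinearMap EU.grading
      (DFinsupp.mapRange (fun n => ⇑(GU A EU EW EUW e he n))
        (fun n => map_zero (GU A EU EW EUW e he n)) d) = 0 := by
    rw [sum_fst A EU EW EUW e he d, htm]
    rfl
  have hW : DirectSum.coeLinearMap EW.grading
      (DFinsupp.mapRange (fun n => ⇑(GW A EU EW EUW e he n))
        (fun n => map_zero (GW A EU EW EUW e he n)) d) = 0 := by
    rw [sum_snd A EU EW EUW e he d, htm]
    rfl
  have hU0 : DFinsupp.mapRange (fun n => ⇑(GU A EU EW EUW e he n))
      (fun n => map_zero (GU A EU EW EUW e he n)) d = 0 := by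
    apply (LinearEquiv.ofBijective (DirectSum.coeLinearMap EU.grading)
      EU.isInternal).injective
    show DirectSum.coeLinearMap EU.grading _ = _
    rw [hU]
    simp
  have hW0 : DFinsupp.mapRange (fun n => ⇑(GW A EU EW EUW e he n))
      (fun n => map_zero (GW A EU EW EUW e he n)) d = 0 := by
    apply (LinearEquiv.ofBijective (DirectSum.coeLinearMap EW.grading)
      EW.isInternal).injective
    show DirectSum.coeLinearMap EW.grading _ = _
    rw [hW]
    simp
  have hdz : d = 0 := by
    refine DFinsupp.ext fun n => ?_
    have h1 : GU A EU EW EUW e he n (d n) = 0 := by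
      have := congrFun (congrArg DFinsupp.toFun hU0) n
      simpa [DFinsupp.mapRange_apply] using this
    have h2 : GW A EU EW EUW e he n (d n) = 0 := by
      have := congrFun (congrArg DFinsupp.toFun hW0) n
      simpa [DFinsupp.mapRange_apply] using this
    have hg : GrF A EU EW EUW e he n (d n) = 0 := by
      have ha : (GrF A EU EW EUW e he n (d n)).1 = 0 := congrArg Subtype.val h1
      have hb : (GrF A EU EW EUW e he n (d n)).2 = 0 := congrArg Subtype.val h2
      exact Prod.ext_iff.mpr ⟨ha, hb⟩
    have := GrF_inj A EU EW EUW e he n (by rw [hg, map_zero] :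
      GrF A EU EW EUW e he n (d n) = GrF A EU EW EUW e he n 0)
    simp [this]
  have : u - v = 0 := by
    have h9 := congrArg E1 hdz
    rw [hd, LinearEquiv.apply_symm_apply] at h9
    rw [h9]
    exact E1.toLinearMap.map_zero
  exact sub_eq_zero.mp this

include he in
lemma FF_surj : Function.Surjective (FF A EU EW EUW e he) := by
  have hC : ∀ n : ℤ, (EU.grading n).prod (EW.grading n)
      ≤ LinearMap.range (FF A EU EW EUW e he) := by
    intro n q hq
    rw [← SZ_snd A EU EW EUW e n] at hq
    obtain ⟨p, hp, rfl⟩ := hq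
    have h1 := (SZ_le A EU EW EUW e n hp).1
    have h2 : FF A EU EW EUW e he p.1 = p.2 :=
      FF_uniq A EU EW EUW e he n p.1 p.2 h1 hp
    exact ⟨p.1, h2⟩
  have hU : ∀ u : MU, ((u, (0:MW)) : MU × MW) ∈ LinearMap.range (FF A EU EW EUW e he) := by
    intro u
    have hu : u ∈ (⊤ : Submodule k MU) := Submodule.mem_top
    rw [← EU.isInternal.submodule_iSup_eq_top] at hu
    have hmap : Submodule.map (LinearMap.inl k MU MW) (⨆ n, EU.grading n)
        ≤ LinearMap.range (FF A EU EW EUW e he) := by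
      rw [Submodule.map_iSup]
      apply iSup_le
      intro n
      rintro w ⟨u', hu', rfl⟩
      exact hC n ⟨hu', Submodule.zero_mem _⟩
    exact hmap ⟨u, hu, rfl⟩
  have hW : ∀ w : MW, (((0:MU), w) : MU × MW) ∈ LinearMap.range (FF A EU EW EUW e he) := by
    intro w
    have hw : w ∈ (⊤ : Submodule k MW) := Submodule.mem_top
    rw [← EW.isInternal.submodule_iSup_eq_top] at hw
    have hmap : Submodule.map (LinearMap.inr k MU MW) (⨆ n, EW.grading n)
        ≤ LinearMap.range (FF A EU EW EUW e he) := by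
      rw [Submodule.map_iSup]
      apply iSup_le
      intro n
      rintro z ⟨w', hw', rfl⟩
      exact hC n ⟨Submodule.zero_mem _, hw'⟩
    exact hmap ⟨w, hw, rfl⟩
  intro q
  obtain ⟨a, ha⟩ := hU q.1
  obtain ⟨b, hb⟩ := hW q.2
  refine ⟨a + b, ?_⟩
  rw [map_add, ha, hb]
  rw [Prod.ext_iff]
  simp

end Statement17Aux

/-- Let `(g,ρ,V,𝒱,B₀)` be a standard pentad and let `U`, `W'` be
`g`-modules.  Then the positive extension of `U ⊕ W'` with respect to the pentad is isomorphic
as an `L(g,ρ,V,𝒱,B₀)`-module to the direct sum of the positive extensions of `U` and of `W'`.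
(The `g`-modules here are realized as the degree-zero parts of the respective positive
extensions; the hypothesis `e` says that the degree-zero part of `MUW` is the direct sum of
those of `MU` and `MW`.) -/
theorem statement17
    {k g V W L MU MW MUW : Type*} [Field k] [LieRing g] [LieAlgebra k g]
    [AddCommGroup V] [Module k V] [AddCommGroup W] [Module k W]
    [LieRing L] [LieAlgebra k L]
    [AddCommGroup MU] [Module k MU] [LieRingModule L MU] [LieModule k L MU]
    [AddCommGroup MW] [Module k MW] [LieRingModule L MW] [LieModule k L MW]
    [AddCommGroup MUW] [Module k MUW] [LieRingModule L MUW] [LieModule k L MUW]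
    (P : PentadStruct k g V W)
    (A : AssocGradedLieAlgebra k g V W P L)
    -- positive extensions of `U`, `W'` and of `U ⊕ W'`:
    (EU : PositiveExtension k g V W P L A MU)
    (EW : PositiveExtension k g V W P L A MW)
    (EUW : PositiveExtension k g V W P L A MUW)
    -- the degree-zero part of `MUW` is, `g`-equivariantly, the direct sum of those of
    -- `MU` and `MW`:
    (e : ↥(EUW.grading 0) ≃ₗ[k] ↥(EU.grading 0) × ↥(EW.grading 0))
    (he : ∀ (a : g) (u : EUW.grading 0) (h : ⁅A.ιg a, (u : MUW)⁆ ∈ EUW.grading 0),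
      (((e ⟨⁅A.ιg a, (u : MUW)⁆, h⟩).1 : MU), ((e ⟨⁅A.ιg a, (u : MUW)⁆, h⟩).2 : MW))
        = (⁅A.ιg a, ((e u).1 : MU)⁆, ⁅A.ιg a, ((e u).2 : MW)⁆)) :
    ∃ f : MUW ≃ₗ[k] MU × MW,
      ∀ (x : L) (u : MUW), f ⁅x, u⁆ = ⁅x, f u⁆ := by
  refine ⟨LinearEquiv.ofBijective (FF A EU EW EUW e he)
    ⟨FF_inj A EU EW EUW e he, FF_surj A EU EW EUW e he⟩, ?_⟩
  intro x u
  show FF A EU EW EUW e he ⁅x, u⁆ = ⁅x, FF A EU EW EUW e he u⁆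
  exact FF_equiv A EU EW EUW e he x u
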